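/- Let E = (e_{ij}) be an H×H matrix with nonnegative entries and all row sums equal to 1, and let κ := ‖E − (1/H)𝟙𝟙ᵀE‖² (squared ℓ₂ operator norm, 𝟙 ∈ ℝ^H the all-ones vector). Let (λ_i)_{i=1}^H be vectors in ℝ^d, set λ̄_i := Σ_{j=1}^H e_{ij}λ_j, and let ρ ≥ 0 and (z_i)_{i=1}^H be vectors satisfying ‖z_i − λ̄_i‖² ≤ ρ·Σ_{j=1}^H e_{ij}‖λ_j − λ̄_i‖² for every i. Then for every w ∈ (0,1): Σ_{i=1}^H ‖z_i − (1/H)Σ_{j=1}^H z_j‖² ≤ (κ/(1−w) + 16ρH/w)·Σ_{i=1}^H ‖λ_i − (1/H)Σ_{j=1}^H λ_j‖². -/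

import Mathlib

open Finset

private lemma euc_sum_apply' {ι : Type*} (s : Finset ι) {n : ℕ}
    (f : ι → EuclideanSpace ℝ (Fin n)) (c : Fin n) :
    (∑ j ∈ s, f j) c = ∑ j ∈ s, f j c :=
  map_sum (EuclideanSpace.proj (𝕜 := ℝ) c) f s

private lemma euc_norm_sq' {n : ℕ} (x : EuclideanSpace ℝ (Fin n)) :
    ‖x‖ ^ 2 = ∑ i, (x i) ^ 2 := by
  rw [EuclideanSpace.norm_eq, Real.sq_sqrt (by positivity)]
  simp [sq_abs]

private lemma young_sq' {E : Type*} [SeminormedAddGroup E] (w : ℝ)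
    (hw0 : 0 < w) (hw1 : w < 1) (a b : E) :
    ‖a + b‖ ^ 2 ≤ (1/(1-w)) * ‖a‖ ^ 2 + (1/w) * ‖b‖ ^ 2 := by
  have h := norm_add_le a b
  have h1 : (0:ℝ) < 1 - w := by linarith
  have ha := norm_nonneg a
  have hb := norm_nonneg b
  have hab := norm_nonneg (a + b)
  have hs : ‖a + b‖ ^ 2 ≤ (‖a‖ + ‖b‖) ^ 2 := by nlinarith
  have e : (1/(1-w)) * ‖a‖ ^ 2 + (1/w) * ‖b‖ ^ 2 - (‖a‖ + ‖b‖) ^ 2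
      = (w * ‖a‖ - (1-w) * ‖b‖) ^ 2 / (w * (1-w)) := by field_simp; ring
  nlinarith [div_nonneg (sq_nonneg (w * ‖a‖ - (1-w) * ‖b‖)) (le_of_lt (mul_pos hw0 h1))]

set_option maxHeartbeats 1000000 in
/-- **One-aggregation-step disagreement contraction for a robust aggregation
rule satisfying the contraction condition (Property 1).** -/
theorem aggregation_step_disagreement_contraction
    (d H : ℕ) (hH : 1 ≤ H)
    (Emat : Matrix (Fin H) (Fin H) ℝ)
    (hEnn : ∀ i j, 0 ≤ Emat i j)
    (hErow : ∀ i, ∑ j, Emat i j = 1)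
    (κ : ℝ)
    (hκ : κ = ‖LinearMap.toContinuousLinearMap
        (Matrix.toEuclideanLin
          (Emat - Matrix.of fun _ j => (H : ℝ)⁻¹ * ∑ k, Emat k j))‖ ^ 2)
    (lam z : Fin H → EuclideanSpace ℝ (Fin d))
    (ρ : ℝ) (hρ : 0 ≤ ρ)
    (hz : ∀ i,
      ‖z i - ∑ j, Emat i j • lam j‖ ^ 2
        ≤ ρ * ∑ j, Emat i j * ‖lam j - ∑ k, Emat i k • lam k‖ ^ 2) :
    ∀ w ∈ Set.Ioo (0 : ℝ) 1,
      ∑ i, ‖z i - (H : ℝ)⁻¹ • ∑ j, z j‖ ^ 2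
        ≤ (κ / (1 - w) + 16 * ρ * (H : ℝ) / w)
          * ∑ i, ‖lam i - (H : ℝ)⁻¹ • ∑ j, lam j‖ ^ 2 := by
  intro w hw
  obtain ⟨hw0, hw1⟩ := hw
  have hH1 : (1:ℝ) ≤ (H:ℝ) := by exact_mod_cast hH
  have hH0 : (0:ℝ) < (H:ℝ) := by linarith
  have hHne : (H:ℝ) ≠ 0 := ne_of_gt hH0
  set μ : EuclideanSpace ℝ (Fin d) := (H:ℝ)⁻¹ • ∑ j, lam j with hμ
  set lhat : Fin H → EuclideanSpace ℝ (Fin d) := fun i => ∑ j, Emat i j • lam j with hlhat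
  set δ : Fin H → EuclideanSpace ℝ (Fin d) := fun i => z i - lhat i with hδdef
  set A : ℝ := ∑ i, ‖lam i - μ‖ ^ 2 with hA
  have hA0 : 0 ≤ A := Finset.sum_nonneg fun i _ => sq_nonneg _
  have hsingle : ∀ j, ‖lam j - μ‖ ^ 2 ≤ A := fun j =>
    Finset.single_le_sum (f := fun k => ‖lam k - μ‖ ^ 2)
      (fun k _ => sq_nonneg _) (mem_univ j)
  -- weighted sums bounded by A
  have hwA : ∀ i, ∑ j, Emat i j * ‖lam j - μ‖ ^ 2 ≤ A := by
    intro i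
    apply Finset.sum_le_sum
    intro j _
    have h1 : Emat i j ≤ 1 := by
      have h2 := Finset.single_le_sum (f := fun k => Emat i k)
        (fun k _ => hEnn i k) (mem_univ j)
      rw [hErow i] at h2; exact h2
    calc Emat i j * ‖lam j - μ‖ ^ 2 ≤ 1 * ‖lam j - μ‖ ^ 2 :=
          mul_le_mul_of_nonneg_right h1 (sq_nonneg _)
      _ = ‖lam j - μ‖ ^ 2 := one_mul _
  -- robust-mean distance to global mean
  have hhat : ∀ i, ‖lhat i - μ‖ ^ 2 ≤ A := by
    intro i
    have hrepr : lhat i - μ = ∑ j, Emat i j • (lam j - μ) := by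
      simp only [hlhat, smul_sub, Finset.sum_sub_distrib, ← Finset.sum_smul, hErow i, one_smul]
    have h1 : ‖lhat i - μ‖ ≤ ∑ j, Emat i j * ‖lam j - μ‖ := by
      rw [hrepr]
      refine (norm_sum_le _ _).trans (le_of_eq (Finset.sum_congr rfl fun j _ => ?_))
      rw [norm_smul, Real.norm_eq_abs, abs_of_nonneg (hEnn i j)]
    have h2 : (∑ j, Emat i j * ‖lam j - μ‖) ^ 2 ≤ ∑ j, Emat i j * ‖lam j - μ‖ ^ 2 := by
      have h3 := Finset.sum_sq_le_sum_mul_sum_of_sq_eq_mul Finset.univ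
        (r := fun j => Emat i j * ‖lam j - μ‖) (f := fun j => Emat i j)
        (g := fun j => Emat i j * ‖lam j - μ‖ ^ 2)
        (fun j _ => hEnn i j)
        (fun j _ => mul_nonneg (hEnn i j) (sq_nonneg _))
        (fun j _ => by ring)
      rwa [hErow i, one_mul] at h3
    calc ‖lhat i - μ‖ ^ 2 ≤ (∑ j, Emat i j * ‖lam j - μ‖) ^ 2 :=
          pow_le_pow_left₀ (norm_nonneg _) h1 2
      _ ≤ ∑ j, Emat i j * ‖lam j - μ‖ ^ 2 := h2
      _ ≤ A := hwA i
  -- perturbation bound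
  have hδi : ∀ i, ‖δ i‖ ^ 2 ≤ 4 * ρ * A := by
    intro i
    refine (hz i).trans ?_
    have hterm : ∀ j, ‖lam j - lhat i‖ ^ 2 ≤ 4 * A := by
      intro j
      have hd : lam j - lhat i = (lam j - μ) + -(lhat i - μ) := by abel
      have h := norm_add_le (lam j - μ) (-(lhat i - μ))
      rw [norm_neg] at h
      have h4 : ‖lam j - lhat i‖ ^ 2 ≤ 2 * ‖lam j - μ‖ ^ 2 + 2 * ‖lhat i - μ‖ ^ 2 := by
        rw [hd]
        nlinarith [norm_nonneg (lam j - μ), norm_nonneg (lhat i - μ),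
          norm_nonneg ((lam j - μ) + -(lhat i - μ)),
          sq_nonneg (‖lam j - μ‖ - ‖lhat i - μ‖)]
      have := hsingle j
      have := hhat i
      linarith
    calc ρ * ∑ j, Emat i j * ‖lam j - lhat i‖ ^ 2
        ≤ ρ * ∑ j, Emat i j * (4 * A) := by
          refine mul_le_mul_of_nonneg_left (Finset.sum_le_sum fun j _ => ?_) hρ
          exact mul_le_mul_of_nonneg_left (hterm j) (hEnn i j)
      _ = ρ * (4 * A) := by rw [← Finset.sum_mul, hErow i, one_mul]
      _ = 4 * ρ * A := by ring
  set S : ℝ := ∑ i, ‖δ i‖ ^ 2 with hSdef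
  have hS0 : 0 ≤ S := Finset.sum_nonneg fun i _ => sq_nonneg _
  have hS : S ≤ 4 * ρ * (H:ℝ) * A := by
    calc S ≤ ∑ _i : Fin H, 4 * ρ * A := Finset.sum_le_sum fun i _ => hδi i
      _ = (H:ℝ) * (4 * ρ * A) := by
          rw [Finset.sum_const, Finset.card_univ, Fintype.card_fin, nsmul_eq_mul]
      _ = 4 * ρ * (H:ℝ) * A := by ring
  -- matrix / operator-norm step
  set M : Matrix (Fin H) (Fin H) ℝ :=
    Emat - Matrix.of fun _ j => (H : ℝ)⁻¹ * ∑ k, Emat k j with hM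
  set T := LinearMap.toContinuousLinearMap (Matrix.toEuclideanLin M) with hT
  have hκ0 : 0 ≤ κ := hκ ▸ sq_nonneg _
  set μh : EuclideanSpace ℝ (Fin d) := (H:ℝ)⁻¹ • ∑ j, lhat j with hμh
  have hrow0 : ∀ i, ∑ j, M i j = 0 := by
    intro i
    have hswap : ∑ j, ((H:ℝ)⁻¹ * ∑ k, Emat k j) = (H:ℝ)⁻¹ * ∑ k, ∑ j, Emat k j := by
      rw [← Finset.mul_sum, Finset.sum_comm]
    simp only [hM, Matrix.sub_apply, Matrix.of_apply, Finset.sum_sub_distrib, hErow i, hswap]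
    simp [hErow, Finset.card_univ, hHne]
  have hTx : ∀ (v : Fin H → ℝ) (i : Fin H),
      (T ((WithLp.equiv 2 (Fin H → ℝ)).symm v)) i = ∑ j, M i j * v j := by
    intro v i
    show (M.mulVec v) i = _
    simp [Matrix.mulVec, dotProduct]
  set ucol : Fin d → EuclideanSpace ℝ (Fin H) :=
    fun c => (WithLp.equiv 2 (Fin H → ℝ)).symm (fun j => lam j c - μ c) with hucol
  have hμc : ∀ c, μ c = (H:ℝ)⁻¹ * ∑ j, lam j c := by
    intro c
    simp [hμ, euc_sum_apply', PiLp.smul_apply, smul_eq_mul]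
  have hlhatc : ∀ k c, lhat k c = ∑ j, Emat k j * lam j c := by
    intro k c
    simp [hlhat, euc_sum_apply', PiLp.smul_apply, smul_eq_mul]
  have key : ∀ (c : Fin d) (i : Fin H), (T (ucol c)) i = lhat i c - μh c := by
    intro c i
    rw [hucol, hTx]
    have hμhc : μh c = (H:ℝ)⁻¹ * ∑ k, ∑ j, Emat k j * lam j c := by
      simp [hμh, euc_sum_apply', PiLp.smul_apply, smul_eq_mul, hlhatc]
    rw [hμhc, hlhatc]
    calc ∑ j, M i j * (lam j c - μ c)
        = (∑ j, M i j * lam j c) - (∑ j, M i j) * μ c := by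
          rw [Finset.sum_mul, ← Finset.sum_sub_distrib]
          exact Finset.sum_congr rfl fun j _ => by ring
      _ = ∑ j, M i j * lam j c := by rw [hrow0 i]; ring
      _ = (∑ j, Emat i j * lam j c) - (H:ℝ)⁻¹ * ∑ k, ∑ j, Emat k j * lam j c := by
          simp only [hM, Matrix.sub_apply, Matrix.of_apply, sub_mul, Finset.sum_sub_distrib]
          congr 1
          simp_rw [mul_assoc]
          rw [← Finset.mul_sum]
          congr 1
          simp_rw [Finset.sum_mul]
          rw [Finset.sum_comm]
  have hB : ∑ i, ‖lhat i - μh‖ ^ 2 ≤ κ * A := by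
    have hBc : ∑ i, ‖lhat i - μh‖ ^ 2 = ∑ c, ‖T (ucol c)‖ ^ 2 := by
      simp_rw [euc_norm_sq']
      rw [Finset.sum_comm]
      refine Finset.sum_congr rfl fun c _ => Finset.sum_congr rfl fun i _ => ?_
      rw [key c i]
      rfl
    have hAc : A = ∑ c, ‖ucol c‖ ^ 2 := by
      simp_rw [hA, euc_norm_sq']
      rw [Finset.sum_comm]
      rfl
    rw [hBc, hAc, Finset.mul_sum]
    refine Finset.sum_le_sum fun c _ => ?_
    have h1 := T.le_opNorm (ucol c)
    rw [hκ]
    calc ‖T (ucol c)‖ ^ 2 ≤ (‖T‖ * ‖ucol c‖) ^ 2 := by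
          apply pow_le_pow_left₀ (norm_nonneg _) h1
      _ = ‖T‖ ^ 2 * ‖ucol c‖ ^ 2 := mul_pow _ _ _
  -- decomposition of z
  set μδ : EuclideanSpace ℝ (Fin d) := (H:ℝ)⁻¹ • ∑ j, δ j with hμδ
  have hzdec : ∀ i, z i - (H:ℝ)⁻¹ • ∑ j, z j = (lhat i - μh) + (δ i - μδ) := by
    intro i
    rw [hμδ, hμh, hδdef]
    simp only [Finset.sum_sub_distrib, smul_sub]
    abel
  have hμδn : ‖μδ‖ ^ 2 ≤ S / (H:ℝ) := by
    have h1 : ‖μδ‖ ≤ (H:ℝ)⁻¹ * ∑ j, ‖δ j‖ := by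
      rw [hμδ, norm_smul, Real.norm_eq_abs, abs_of_nonneg (by positivity)]
      exact mul_le_mul_of_nonneg_left (norm_sum_le _ _) (by positivity)
    have h2 : (∑ j, ‖δ j‖) ^ 2 ≤ (H:ℝ) * S := by
      have h3 := sq_sum_le_card_mul_sum_sq (s := Finset.univ) (f := fun j => ‖δ j‖)
      simpa [Finset.card_univ] using h3
    have h3 : ‖μδ‖ ^ 2 ≤ ((H:ℝ)⁻¹ * ∑ j, ‖δ j‖) ^ 2 := pow_le_pow_left₀ (norm_nonneg _) h1 2
    have h4 : ((H:ℝ)⁻¹ * ∑ j, ‖δ j‖) ^ 2 ≤ (H:ℝ)⁻¹ ^ 2 * ((H:ℝ) * S) := by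
      rw [mul_pow]
      exact mul_le_mul_of_nonneg_left h2 (by positivity)
    have h5 : (H:ℝ)⁻¹ ^ 2 * ((H:ℝ) * S) = S / (H:ℝ) := by field_simp
    linarith
  have hδm : ∑ i, ‖δ i - μδ‖ ^ 2 ≤ 4 * S := by
    calc ∑ i, ‖δ i - μδ‖ ^ 2 ≤ ∑ i, (2 * ‖δ i‖ ^ 2 + 2 * ‖μδ‖ ^ 2) := by
          refine Finset.sum_le_sum fun i _ => ?_
          have h := norm_sub_le (δ i) μδ
          nlinarith [norm_nonneg (δ i), norm_nonneg μδ, norm_nonneg (δ i - μδ),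
            sq_nonneg (‖δ i‖ - ‖μδ‖)]
      _ = 2 * S + (H:ℝ) * (2 * ‖μδ‖ ^ 2) := by
          rw [Finset.sum_add_distrib, ← Finset.mul_sum, Finset.sum_const,
            Finset.card_univ, Fintype.card_fin, nsmul_eq_mul]
      _ ≤ 2 * S + (H:ℝ) * (2 * (S / (H:ℝ))) := by
          have := mul_le_mul_of_nonneg_left (by linarith [hμδn] : 2 * ‖μδ‖ ^ 2 ≤ 2 * (S / (H:ℝ))) (le_of_lt hH0)
          linarith
      _ = 4 * S := by field_simp; ring
  -- final combination
  calc ∑ i, ‖z i - (H:ℝ)⁻¹ • ∑ j, z j‖ ^ 2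
      = ∑ i, ‖(lhat i - μh) + (δ i - μδ)‖ ^ 2 :=
        Finset.sum_congr rfl fun i _ => by rw [hzdec i]
    _ ≤ ∑ i, ((1/(1-w)) * ‖lhat i - μh‖ ^ 2 + (1/w) * ‖δ i - μδ‖ ^ 2) :=
        Finset.sum_le_sum fun i _ => young_sq' w hw0 hw1 _ _
    _ = (1/(1-w)) * (∑ i, ‖lhat i - μh‖ ^ 2) + (1/w) * (∑ i, ‖δ i - μδ‖ ^ 2) := by
        rw [Finset.sum_add_distrib, ← Finset.mul_sum, ← Finset.mul_sum]
    _ ≤ (1/(1-w)) * (κ * A) + (1/w) * (4 * S) := by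
        have hw1' : (0:ℝ) < 1 - w := by linarith
        exact add_le_add
          (mul_le_mul_of_nonneg_left hB (by positivity))
          (mul_le_mul_of_nonneg_left hδm (by positivity))
    _ ≤ (1/(1-w)) * (κ * A) + (1/w) * (16 * ρ * (H:ℝ) * A) := by
        have h16 : 4 * S ≤ 16 * ρ * (H:ℝ) * A := by linarith
        exact add_le_add_right (mul_le_mul_of_nonneg_left h16 (by positivity)) _
    _ = (κ / (1 - w) + 16 * ρ * (H:ℝ) / w) * A := by ring
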